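/- Let R be a ring, V an R-R-bimodule and v: R → V a map of R-R-bimodules that is a pure monomorphism of right R-modules, so that (Cyl_v, γ, σ) with Cyl_v(M) = M ⊕ (V ⊗_R M) is a cylinder for (Mono, Mono^□) on left R-modules. Then this cylinder is cartesian if and only if V is flat as a right R-module. -/

import Mathlib

/-!
Common definitions: weak factorization systems, functorial cylinders,
Cisinski's construction, localizers, locally presentable categories.
-/

universe w v u u₁ u₂ u₃

open CategoryTheory Limits Opposite

namespace Paper

variable {K : Type u} [Category.{v} K]

/-- The class of maps with the right lifting property against all maps in `H`. -/
def Rlp (H : MorphismProperty K) : MorphismProperty K :=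
  fun _ _ g => ∀ ⦃A B : K⦄ (h : A ⟶ B), H h → HasLiftingProperty h g

/-- The class of maps with the left lifting property against all maps in `H`. -/
def Llp (H : MorphismProperty K) : MorphismProperty K :=
  fun _ _ f => ∀ ⦃A B : K⦄ (h : A ⟶ B), H h → HasLiftingProperty f h

/-- Weak factorization system. -/
structure IsWFS (L R : MorphismProperty K) : Prop where
  llp_eq : L = Llp R
  rlp_eq : R = Rlp L
  factor : ∀ ⦃X Y : K⦄ (f : X ⟶ Y),
    ∃ (Z : K) (l : X ⟶ Z) (r : Z ⟶ Y), L l ∧ R r ∧ l ≫ r = f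

/-- A class of maps is essentially a (small) set. -/
def IsSmallClass (I : MorphismProperty K) : Prop :=
  Small.{v} (Σ (X : K) (Y : K), { f : X ⟶ Y // I f })

/-- Every object is cofibrant. -/
def AllCofibrant [HasInitial K] (L : MorphismProperty K) : Prop :=
  ∀ X : K, L (initial.to X)

/-- `L` is cofibrantly generated (by a set). -/
def CofGenerated (L : MorphismProperty K) : Prop :=
  ∃ I : MorphismProperty K, IsSmallClass I ∧ L = Llp (Rlp I)

/-- intersection of two classes of maps -/
def interClass (A B : MorphismProperty K) : MorphismProperty K := fun _ _ f => A f ∧ B f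

/-- closed under retracts in the arrow category -/
def RetractClosed (W : MorphismProperty K) : Prop :=
  ∀ ⦃f g : Arrow K⦄ (i : f ⟶ g) (r : g ⟶ f), i ≫ r = 𝟙 f → W g.hom → W f.hom

/-- the 2-out-of-3 property -/
def TwoOutOfThree (W : MorphismProperty K) : Prop :=
  (∀ ⦃X Y Z : K⦄ (f : X ⟶ Y) (g : Y ⟶ Z), W f → W g → W (f ≫ g)) ∧
  (∀ ⦃X Y Z : K⦄ (f : X ⟶ Y) (g : Y ⟶ Z), W f → W (f ≫ g) → W g) ∧
  (∀ ⦃X Y Z : K⦄ (f : X ⟶ Y) (g : Y ⟶ Z), W g → W (f ≫ g) → W f)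

/-- Quillen model structure, given by cofibrations, weak equivalences and fibrations. -/
structure IsModelStructure (Cof W Fib : MorphismProperty K) : Prop where
  retractClosed : RetractClosed W
  twoOutOfThree : TwoOutOfThree W
  wfs₁ : IsWFS Cof (interClass W Fib)
  wfs₂ : IsWFS (interClass Cof W) Fib

/-- the functor `X ↦ X + X` -/
@[simps] noncomputable def double (K : Type u) [Category.{v} K] [HasBinaryCoproducts K] :
    K ⥤ K where
  obj X := X ⨿ X
  map f := coprod.map f f

/-- A functorial cylinder: a functor `C` together with natural transformations
`γ : X + X ⟶ C X` and `σ : C X ⟶ X` factoring the codiagonal. -/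
structure Cylinder (K : Type u) [Category.{v} K] [HasBinaryCoproducts K] where
  C : K ⥤ K
  γ : double K ⟶ C
  σ : C ⟶ 𝟭 K
  fac : ∀ X : K, γ.app X ≫ σ.app X = coprod.desc (𝟙 X) (𝟙 X)

namespace Cylinder
variable [HasBinaryCoproducts K] (cyl : Cylinder K)

/-- `γ⁰` -/
noncomputable def γ₀ : 𝟭 K ⟶ cyl.C where
  app X := coprod.inl ≫ cyl.γ.app X
  naturality X Y f := by
    have h := cyl.γ.naturality f
    dsimp [double] at h ⊢
    rw [Category.assoc, ← h, ← Category.assoc, ← Category.assoc, coprod.inl_map]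

/-- `γ¹` -/
noncomputable def γ₁ : 𝟭 K ⟶ cyl.C where
  app X := coprod.inr ≫ cyl.γ.app X
  naturality X Y f := by
    have h := cyl.γ.naturality f
    dsimp [double] at h ⊢
    rw [Category.assoc, ← h, ← Category.assoc, ← Category.assoc, coprod.inr_map]

/-- `(Cyl, γ, σ)` is a cylinder for a weak factorization system whose left class is `L`
if each `γ_X` lies in `L`. -/
def IsCylinderFor (L : MorphismProperty K) : Prop := ∀ X : K, L (cyl.γ.app X)

/-- the cylinder is final if each `σ_X` lies in `R`. -/
def IsFinal (R : MorphismProperty K) : Prop := ∀ X : K, R (cyl.σ.app X)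

end Cylinder

section Star
variable [HasPushouts K] {F F' : K ⥤ K}

/-- `f ⋆ α`: the induced map from the pushout of `F f` along `α_X` to `F' Y`. -/
noncomputable def starMap (α : F ⟶ F') {X Y : K} (f : X ⟶ Y) :
    pushout (F.map f) (α.app X) ⟶ F'.obj Y :=
  pushout.desc (α.app Y) (F'.map f) (α.naturality f)

/-- the class `L` is stable under `(−) ⋆ α`. -/
def StableUnderStar (L : MorphismProperty K) (α : F ⟶ F') : Prop :=
  ∀ ⦃X Y : K⦄ (f : X ⟶ Y), L f → L (starMap α f)

/-- the class `I ⋆ α = { f ⋆ α | f ∈ I }`. -/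
def starClass (α : F ⟶ F') (I : MorphismProperty K) : MorphismProperty K :=
  fun _ _ g => ∃ (X Y : K) (f : X ⟶ Y), I f ∧ Arrow.mk g = Arrow.mk (starMap α f)

end Star

/-- the cylinder is cartesian with respect to the left class `L`:
the cylinder functor is a left adjoint and `L` is stable under `⋆γ`, `⋆γ⁰` and `⋆γ¹`. -/
structure Cylinder.IsCartesian [HasBinaryCoproducts K] [HasPushouts K]
    (cyl : Cylinder K) (L : MorphismProperty K) : Prop where
  leftAdjoint : cyl.C.IsLeftAdjoint
  star_γ : StableUnderStar L cyl.γ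
  star_γ₀ : StableUnderStar L cyl.γ₀
  star_γ₁ : StableUnderStar L cyl.γ₁

section Lambda
variable [HasBinaryCoproducts K] [HasPushouts K]

/-- `Λⁿ(Cyl,S,I)` -/
noncomputable def LambdaN (cyl : Cylinder K) (S I : MorphismProperty K) :
    ℕ → MorphismProperty K
  | 0 => fun _ _ f => S f ∨ starClass cyl.γ₀ I f ∨ starClass cyl.γ₁ I f
  | n + 1 => starClass cyl.γ (LambdaN cyl S I n)

/-- `Λ(Cyl,S,I)` -/
noncomputable def Lambda (cyl : Cylinder K) (S I : MorphismProperty K) :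
    MorphismProperty K :=
  fun _ _ f => ∃ n : ℕ, LambdaN cyl S I n f

/-- `T` is fibrant if `T → 1` has the right lifting property against `Λ(Cyl,S,I)`. -/
noncomputable def Fibrant [HasTerminal K] (cyl : Cylinder K) (S I : MorphismProperty K)
    (T : K) : Prop :=
  Rlp (Lambda cyl S I) (terminal.from T)

end Lambda

/-- `f` and `g` are homotopic: `(f|g)` factors through `γ_X`. -/
def Htp [HasBinaryCoproducts K] (cyl : Cylinder K) {X Y : K} (f g : X ⟶ Y) : Prop :=
  ∃ h : cyl.C.obj X ⟶ Y, cyl.γ.app X ≫ h = coprod.desc f g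

/-- symmetric-transitive closure of a relation -/
inductive STClos {α : Sort*} (r : α → α → Prop) : α → α → Prop
  | base : ∀ {x y : α}, r x y → STClos r x y
  | symm : ∀ {x y : α}, STClos r x y → STClos r y x
  | trans : ∀ {x y z : α}, STClos r x y → STClos r y z → STClos r x z

/-- the homotopy equivalence relation `∼`, the symmetric-transitive closure of `≃`. -/
def HtpEq [HasBinaryCoproducts K] (cyl : Cylinder K) {X Y : K} : (X ⟶ Y) → (X ⟶ Y) → Prop :=
  STClos (Htp cyl)

/-- `W(Cyl,S,I)`: the maps `f : X ⟶ Y` such that for every fibrant `T` the induced map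
`Hom(Y,T)/∼ → Hom(X,T)/∼` is bijective (expressed elementwise). -/
noncomputable def Weq [HasBinaryCoproducts K] [HasPushouts K] [HasTerminal K]
    (cyl : Cylinder K) (S I : MorphismProperty K) : MorphismProperty K :=
  fun X Y f => ∀ T : K, Fibrant cyl S I T →
    (∀ t : X ⟶ T, ∃ u : Y ⟶ T, HtpEq cyl (f ≫ u) t) ∧
    (∀ u v : Y ⟶ T, HtpEq cyl (f ≫ u) (f ≫ v) → HtpEq cyl u v)

/-- pushout stability of a class of maps -/
def StableUnderPushout (L : MorphismProperty K) : Prop :=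
  ∀ ⦃A B A' B' : K⦄ ⦃f : A ⟶ B⦄ ⦃g : A ⟶ A'⦄ ⦃f' : A' ⟶ B'⦄ ⦃g' : B ⟶ B'⦄,
    IsPushout g f f' g' → L f → L f'

/-- closure under transfinite composition of smooth (colimit preserving) chains -/
def ClosedUnderTransfiniteComposition (L : MorphismProperty K) : Prop :=
  ∀ (o : Ordinal.{v}) (ho : (0 : Ordinal.{v}) < o)
    (D : (Set.Iio o : Set Ordinal.{v}) ⥤ K),
    Nonempty (PreservesColimits D) →
    (∀ (β : Ordinal.{v}) (hβ : β + 1 < o),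
      L (D.map (homOfLE (Subtype.mk_le_mk.mpr (CanonicallyOrderedAdd.le_self_add β 1)) :
        (⟨β, lt_of_le_of_lt (CanonicallyOrderedAdd.le_self_add β 1) hβ⟩ : (Set.Iio o : Set Ordinal.{v})) ⟶
        ⟨β + 1, hβ⟩))) →
    ∀ (c : Cocone D), IsColimit c → L (c.ι.app ⟨0, ho⟩)

/-- A localizer for the class `Cof`: a class `W` with the 2-out-of-3 property, containing
`Cof^□`, and whose intersection with `Cof` is closed under pushouts and transfinite
compositions. -/
structure IsLocalizer (Cof W : MorphismProperty K) : Prop where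
  twoOutOfThree : TwoOutOfThree W
  rlp_le : ∀ ⦃X Y : K⦄ (f : X ⟶ Y), Rlp Cof f → W f
  pushout : StableUnderPushout (interClass Cof W)
  transfinite : ClosedUnderTransfiniteComposition (interClass Cof W)

/-- `W(S)`: the smallest localizer for `Cof` containing `S` (the intersection of all of them). -/
def smallestLocalizer (Cof S : MorphismProperty K) : MorphismProperty K :=
  fun _ _ f => ∀ W : MorphismProperty K, IsLocalizer Cof W →
    (∀ ⦃A B : K⦄ (s : A ⟶ B), S s → W s) → W f

/-- the smallest class containing `S` which is a localizer for `Cof` and moreover closed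
under retracts in the arrow category. -/
def smallestRetractLocalizer (Cof S : MorphismProperty K) : MorphismProperty K :=
  fun _ _ f => ∀ W : MorphismProperty K, IsLocalizer Cof W → RetractClosed W →
    (∀ ⦃A B : K⦄ (s : A ⟶ B), S s → W s) → W f

/-- the empty class of maps -/
def emptyClass (K : Type u) [Category.{v} K] : MorphismProperty K := fun _ _ _ => False

/-- a preorder is `κ`-directed if every subset of cardinality `< κ` has an upper bound -/
def IsCardinalDirected (κ : Cardinal.{v}) (J : Type v) [Preorder J] : Prop :=
  ∀ S : Set J, Cardinal.mk S < κ → ∃ j : J, ∀ s ∈ S, s ≤ j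

/-- an object `X` is `κ`-presentable if `Hom(X,-)` preserves `κ`-directed colimits -/
def IsPresentableObj (κ : Cardinal.{v}) (X : K) : Prop :=
  ∀ (J : Type v) [Preorder J], IsCardinalDirected κ J →
    Nonempty (PreservesColimitsOfShape J (coyoneda.obj (op X)))

/-- `X` is a `κ`-directed colimit of objects from the set `A` -/
def IsDirectedColimitFrom (κ : Cardinal.{v}) (A : Set K) (X : K) : Prop :=
  ∃ (J : Type v) (pre : Preorder J),
    letI := pre
    IsCardinalDirected κ J ∧
      ∃ (D : J ⥤ K) (c : Cocone D), Nonempty (IsColimit c) ∧ c.pt = X ∧ ∀ j : J, D.obj j ∈ A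

/-- `κ`-accessible category -/
structure IsCardinalAccessible (κ : Cardinal.{v}) (K : Type u) [Category.{v} K] : Prop where
  isRegular : κ.IsRegular
  hasDirectedColimits :
    ∀ (J : Type v) [Preorder J], IsCardinalDirected κ J → HasColimitsOfShape J K
  generators : ∃ A : Set K, Small.{v} A ∧ (∀ X ∈ A, IsPresentableObj κ X) ∧
    ∀ X : K, IsDirectedColimitFrom κ A X

/-- accessible category -/
def IsAccessibleCat (K : Type u) [Category.{v} K] : Prop :=
  ∃ κ : Cardinal.{v}, IsCardinalAccessible κ K

/-- locally presentable category: accessible and cocomplete -/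
def IsLocallyPresentable (K : Type u) [Category.{v} K] : Prop :=
  IsAccessibleCat K ∧ HasColimits K

/-- `F` preserves `κ`-directed colimits -/
def PreservesCardinalDirectedColimits (κ : Cardinal.{v}) {A : Type u₁} [Category.{v} A]
    {C : Type u₂} [Category.{v} C] (F : A ⥤ C) : Prop :=
  ∀ (J : Type v) [Preorder J], IsCardinalDirected κ J →
    Nonempty (PreservesColimitsOfShape J F)

/-- accessible functor -/
def IsAccessibleFunctor {A : Type u₁} [Category.{v} A] {C : Type u₂} [Category.{v} C]
    (F : A ⥤ C) : Prop :=
  ∃ κ : Cardinal.{v}, IsCardinalAccessible κ A ∧ IsCardinalAccessible κ C ∧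
    PreservesCardinalDirectedColimits κ F

/-- dual strong deformation retract -/
def DualStrongDeformationRetract [HasBinaryCoproducts K] (cyl : Cylinder K)
    {X Y : K} (f : X ⟶ Y) : Prop :=
  ∃ (g : Y ⟶ X) (h : cyl.C.obj X ⟶ X),
    g ≫ f = 𝟙 Y ∧ cyl.γ₀.app X ≫ h = 𝟙 X ∧ cyl.γ₁.app X ≫ h = f ≫ g ∧
      h ≫ f = cyl.σ.app X ≫ f


section Modules
set_option linter.unusedSectionVars false

variable (R V : Type u) [Ring R] [AddCommGroup V] [Module R V] [Module Rᵐᵒᵖ V]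
  [SMulCommClass R Rᵐᵒᵖ V]

def relators (M : Type u) [AddCommGroup M] [Module R M] :
    Submodule R (TensorProduct ℤ V M) :=
  Submodule.span R
    { t | ∃ (w : V) (r : R) (m : M), t = (MulOpposite.op r • w) ⊗ₜ[ℤ] m - w ⊗ₜ[ℤ] (r • m) }

abbrev NTensor (M : Type u) [AddCommGroup M] [Module R M] : Type u :=
  TensorProduct ℤ V M ⧸ relators R V M

variable {R}

/-- the `R`-linear map `V ⊗_ℤ M → V ⊗_ℤ N` induced by `f`. -/
noncomputable def tmap {M N : Type u} [AddCommGroup M] [Module R M]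
    [AddCommGroup N] [Module R N] (f : M →ₗ[R] N) :
    TensorProduct ℤ V M →ₗ[R] TensorProduct ℤ V N where
  toFun := TensorProduct.map (LinearMap.id : V →ₗ[ℤ] V) f.toAddMonoidHom.toIntLinearMap
  map_add' := map_add _
  map_smul' r t := by
    simp only [RingHom.id_apply]
    induction t using TensorProduct.induction_on with
    | zero => simp
    | tmul w m => simp [TensorProduct.smul_tmul']
    | add x y hx hy => simp [smul_add, hx, hy]

@[simp] lemma tmap_tmul {M N : Type u} [AddCommGroup M] [Module R M]
    [AddCommGroup N] [Module R N] (f : M →ₗ[R] N) (w : V) (m : M) :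
    tmap V f (w ⊗ₜ[ℤ] m) = w ⊗ₜ[ℤ] (f m) := by
  simp [tmap]

/-- the map `V ⊗_R M → V ⊗_R N` induced by `f`. -/
noncomputable def ntMap {M N : Type u} [AddCommGroup M] [Module R M]
    [AddCommGroup N] [Module R N] (f : M →ₗ[R] N) :
    NTensor R V M →ₗ[R] NTensor R V N :=
  Submodule.mapQ (relators R V M) (relators R V N) (tmap V f) (by
    rw [relators, Submodule.span_le]
    rintro t ⟨w, r, m, rfl⟩
    simp only [SetLike.mem_coe, Submodule.mem_comap, map_sub, tmap_tmul, map_smul]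
    exact Submodule.subset_span ⟨w, r, f m, rfl⟩)

@[simp] lemma ntMap_mk {M N : Type u} [AddCommGroup M] [Module R M]
    [AddCommGroup N] [Module R N] (f : M →ₗ[R] N) (t : TensorProduct ℤ V M) :
    ntMap V f (Submodule.Quotient.mk t) = Submodule.Quotient.mk (tmap V f t) :=
  Submodule.mapQ_apply _ _ _ t

lemma tmap_id {M : Type u} [AddCommGroup M] [Module R M] :
    tmap V (LinearMap.id : M →ₗ[R] M) = LinearMap.id := by
  refine LinearMap.ext fun t => ?_
  induction t using TensorProduct.induction_on with
  | zero => simp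
  | tmul w m => simp
  | add x y hx hy => simp [map_add, hx, hy]

lemma ntMap_id {M : Type u} [AddCommGroup M] [Module R M] :
    ntMap V (LinearMap.id : M →ₗ[R] M) = LinearMap.id := by
  refine LinearMap.ext fun q => ?_
  obtain ⟨t, rfl⟩ := Submodule.Quotient.mk_surjective _ q
  rw [ntMap_mk, tmap_id]
  rfl

lemma tmap_comp {M N P : Type u} [AddCommGroup M] [Module R M] [AddCommGroup N]
    [Module R N] [AddCommGroup P] [Module R P] (f : M →ₗ[R] N) (g : N →ₗ[R] P) :
    tmap V (g.comp f) = (tmap V g).comp (tmap V f) := by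
  refine LinearMap.ext fun t => ?_
  induction t using TensorProduct.induction_on with
  | zero => simp
  | tmul w m => simp
  | add x y hx hy => simp [map_add, hx, hy]

lemma ntMap_comp {M N P : Type u} [AddCommGroup M] [Module R M] [AddCommGroup N]
    [Module R N] [AddCommGroup P] [Module R P] (f : M →ₗ[R] N) (g : N →ₗ[R] P) :
    ntMap V (g.comp f) = (ntMap V g).comp (ntMap V f) := by
  refine LinearMap.ext fun q => ?_
  obtain ⟨t, rfl⟩ := Submodule.Quotient.mk_surjective _ q
  simp [tmap_comp]

/-- the cylinder functor `M ↦ M ⊕ (V ⊗_R M)` on left `R`-modules -/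
noncomputable def cylFunctor : ModuleCat.{u} R ⥤ ModuleCat.{u} R where
  obj M := ModuleCat.of R (M × NTensor R V M)
  map {M N} f := ModuleCat.ofHom (LinearMap.prodMap f.hom (ntMap V f.hom))
  map_id M := by
    refine ModuleCat.hom_ext (LinearMap.ext fun x => ?_)
    show (x.1, ntMap V (LinearMap.id : M →ₗ[R] M) x.2) = (x.1, x.2)
    rw [ntMap_id]
    rfl
  map_comp {M N P} f g := by
    refine ModuleCat.hom_ext (LinearMap.ext fun x => ?_)
    show (g.hom (f.hom x.1), ntMap V (g.hom.comp f.hom) x.2)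
        = (g.hom (f.hom x.1), ntMap V g.hom (ntMap V f.hom x.2))
    rw [ntMap_comp]
    rfl

variable (R)

/-- the map `M ≅ R ⊗_R M → V ⊗_R M` induced by `v : R → V` -/
noncomputable def vMap (v : R →ₗ[R] V) (hv : ∀ x s : R, v (x * s) = MulOpposite.op s • v x)
    (M : Type u) [AddCommGroup M] [Module R M] : M →ₗ[R] NTensor R V M where
  toFun m := Submodule.Quotient.mk ((v 1) ⊗ₜ[ℤ] m)
  map_add' m m' := by rw [TensorProduct.tmul_add, Submodule.Quotient.mk_add]
  map_smul' r m := by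
    simp only [RingHom.id_apply]
    have key : r • v 1 = MulOpposite.op r • v 1 := by
      rw [← map_smul v r 1, smul_eq_mul, mul_one, ← hv 1 r, one_mul]
    rw [← Submodule.Quotient.mk_smul, TensorProduct.smul_tmul', key]
    refine (Submodule.Quotient.eq _).mpr ?_
    have hgen : ((MulOpposite.op r • v 1) ⊗ₜ[ℤ] m - (v 1) ⊗ₜ[ℤ] (r • m)) ∈ relators R V M :=
      Submodule.subset_span ⟨v 1, r, m, rfl⟩
    have h := neg_mem hgen
    rwa [neg_sub] at h


section CylV
variable (R : Type u) [Ring R] (V : Type u) [AddCommGroup V] [Module R V]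
  [Module Rᵐᵒᵖ V] [SMulCommClass R Rᵐᵒᵖ V]
  (v : R →ₗ[R] V) (hv : ∀ x s : R, v (x * s) = MulOpposite.op s • v x)

/-- `γ⁰_M : M → Cyl_v M`, the first inclusion -/
noncomputable def cylInl (M : ModuleCat.{u} R) : M ⟶ (cylFunctor (R := R) V).obj M :=
  ModuleCat.ofHom (LinearMap.prod LinearMap.id 0)

/-- `γ¹_M = (id_M, v ⊗ id_M) : M → Cyl_v M` -/
noncomputable def cylInr (M : ModuleCat.{u} R) : M ⟶ (cylFunctor (R := R) V).obj M :=
  ModuleCat.ofHom (LinearMap.prod LinearMap.id (vMap R V v hv M))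

lemma cylInl_natural {M N : ModuleCat.{u} R} (f : M ⟶ N) :
    f ≫ cylInl R V N = cylInl R V M ≫ (cylFunctor (R := R) V).map f := by
  refine ModuleCat.hom_ext (LinearMap.ext fun m => ?_)
  show (f.hom m, (0 : NTensor R V N)) = (f.hom m, ntMap V f.hom 0)
  rw [map_zero]

lemma cylInr_natural {M N : ModuleCat.{u} R} (f : M ⟶ N) :
    f ≫ cylInr R V v hv N = cylInr R V v hv M ≫ (cylFunctor (R := R) V).map f := by
  refine ModuleCat.hom_ext (LinearMap.ext fun m => ?_)
  show (f.hom m, vMap R V v hv N (f.hom m)) = (f.hom m, ntMap V f.hom (vMap R V v hv M m))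
  have h : ntMap V f.hom (vMap R V v hv M m) = vMap R V v hv N (f.hom m) := by
    show ntMap V f.hom (Submodule.Quotient.mk ((v 1) ⊗ₜ[ℤ] m)) = _
    rw [ntMap_mk, tmap_tmul]
    rfl
  rw [h]

/-- the cylinder `(Cyl_v, γ, σ)` on the category of left `R`-modules -/
noncomputable def cylV : Cylinder (ModuleCat.{u} R) where
  C := cylFunctor (R := R) V
  γ :=
  { app := fun M => coprod.desc (cylInl R V M) (cylInr R V v hv M)
    naturality := fun M N f => by
      dsimp [double]
      rw [coprod.map_desc, coprod.desc_comp, cylInl_natural, cylInr_natural] }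
  σ :=
  { app := fun M => ModuleCat.ofHom (LinearMap.fst R M (NTensor R V M))
    naturality := fun M N f => by
      refine ModuleCat.hom_ext (LinearMap.ext fun x => ?_)
      show f.hom x.1 = f.hom x.1
      rfl }
  fac := fun M => by
    refine (coprod.desc_comp ..).trans ?_
    congr 1
    all_goals exact ModuleCat.hom_ext (LinearMap.ext fun m => rfl)

end CylV

section Helpers
variable {R : Type u} [Ring R] {V : Type u} [AddCommGroup V] [Module R V]
  [Module Rᵐᵒᵖ V] [SMulCommClass R Rᵐᵒᵖ V]

lemma tmap_zero {M N : Type u} [AddCommGroup M] [Module R M] [AddCommGroup N] [Module R N] :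
    tmap V (0 : M →ₗ[R] N) = 0 := by
  refine LinearMap.ext fun t => ?_
  induction t using TensorProduct.induction_on with
  | zero => simp
  | tmul w m => simp
  | add x y hx hy => simp [map_add, hx, hy]

lemma ntMap_zero {M N : Type u} [AddCommGroup M] [Module R M] [AddCommGroup N] [Module R N] :
    ntMap V (0 : M →ₗ[R] N) = 0 := by
  refine LinearMap.ext fun q => ?_
  obtain ⟨t, rfl⟩ := Submodule.Quotient.mk_surjective _ q
  rw [ntMap_mk, tmap_zero]
  rfl

variable (v : R →ₗ[R] V) (hv : ∀ x s : R, v (x * s) = MulOpposite.op s • v x)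

lemma ntMap_vMap {M N : Type u} [AddCommGroup M] [Module R M] [AddCommGroup N] [Module R N]
    (f : M →ₗ[R] N) (m : M) :
    ntMap V f (vMap R V v hv M m) = vMap R V v hv N (f m) := by
  show ntMap V f (Submodule.Quotient.mk ((v 1) ⊗ₜ[ℤ] m)) = _
  rw [ntMap_mk, tmap_tmul]
  rfl

/-- Purity + flatness: the square `M → N`, `V⊗M → V⊗N` is a pullback. -/
lemma pullback_lemma
    (hpure : ∀ (M : Type u) [AddCommGroup M] [Module R M],
      Function.Injective (vMap R V v hv M))
    (hflat : ∀ (M N : Type u) [AddCommGroup M] [Module R M] [AddCommGroup N] [Module R N]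
      (f : M →ₗ[R] N), Function.Injective f → Function.Injective (ntMap V f))
    {M N : Type u} [AddCommGroup M] [Module R M] [AddCommGroup N] [Module R N]
    (f : M →ₗ[R] N) (hf : Function.Injective f) (t : NTensor R V M) (n : N)
    (h : ntMap V f t = vMap R V v hv N n) :
    ∃ m : M, f m = n ∧ vMap R V v hv M m = t := by
  classical
  let π : N →ₗ[R] (N ⧸ LinearMap.range f) := (LinearMap.range f).mkQ
  have hπf : π.comp f = 0 := by
    refine LinearMap.ext fun m => ?_
    simp [π, Submodule.Quotient.mk_eq_zero]
  have h1 : vMap R V v hv (N ⧸ LinearMap.range f) (π n) = 0 := by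
    have h2 := congrArg (fun x => ntMap V π x) h
    rw [ntMap_vMap] at h2
    rw [← h2, ← LinearMap.comp_apply, ← ntMap_comp, hπf, ntMap_zero]
    rfl
  have h2 : π n = 0 := by
    have h3 : vMap R V v hv (N ⧸ LinearMap.range f) (π n)
        = vMap R V v hv (N ⧸ LinearMap.range f) 0 := by rw [h1, map_zero]
    exact hpure _ h3
  have h4 : n ∈ LinearMap.range f := by
    rwa [← Submodule.Quotient.mk_eq_zero]
  obtain ⟨m, hm⟩ := h4
  refine ⟨m, hm, ?_⟩
  refine hflat M N f hf ?_
  rw [ntMap_vMap, hm, h]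

end Helpers

section StarHelper
variable {K : Type u} [Category.{v} K] [HasPushouts K] {F F' : K ⥤ K}

lemma mono_starMap_iff (α : F ⟶ F') {X Y : K} (f : X ⟶ Y)
    {P : K} {inl : F.obj Y ⟶ P} {inr : F'.obj X ⟶ P}
    (w : F.map f ≫ inl = α.app X ≫ inr)
    (hc : IsColimit (PushoutCocone.mk inl inr w))
    (h : P ⟶ F'.obj Y) (h1 : inl ≫ h = α.app Y) (h2 : inr ≫ h = F'.map f) :
    Mono (starMap α f) ↔ Mono h := by
  let e : P ≅ pushout (F.map f) (α.app X) :=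
    hc.coconePointUniqueUpToIso (colimit.isColimit _)
  have einl : inl ≫ e.hom = pushout.inl _ _ := by
    exact hc.comp_coconePointUniqueUpToIso_hom
      (colimit.isColimit _) WalkingSpan.left
  have einr : inr ≫ e.hom = pushout.inr _ _ := by
    exact hc.comp_coconePointUniqueUpToIso_hom
      (colimit.isColimit _) WalkingSpan.right
  have he : e.hom ≫ starMap α f = h := by
    refine PushoutCocone.IsColimit.hom_ext hc ?_ ?_
    · erw [PushoutCocone.mk_inl, ← Category.assoc, einl, starMap, pushout.inl_desc, h1]
    · erw [PushoutCocone.mk_inr, ← Category.assoc, einr, starMap, pushout.inr_desc, h2]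
  constructor
  · intro hm
    rw [← he]
    exact mono_comp _ _
  · intro hm
    have : starMap α f = e.inv ≫ h := by rw [← he, Iso.inv_hom_id_assoc]
    rw [this]
    exact mono_comp _ _

end StarHelper

section StarGamma
variable (R : Type u) [Ring R] (V : Type u) [AddCommGroup V] [Module R V]
  [Module Rᵐᵒᵖ V] [SMulCommClass R Rᵐᵒᵖ V]
  (v : R →ₗ[R] V) (hv : ∀ x s : R, v (x * s) = MulOpposite.op s • v x)

lemma cylV_γ_app (M : ModuleCat.{u} R) :
    (cylV R V v hv).γ.app M = coprod.desc (cylInl R V M) (cylInr R V v hv M) := rfl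

lemma cylV_γ₀_app (M : ModuleCat.{u} R) :
    (cylV R V v hv).γ₀.app M = cylInl R V M := by
  exact coprod.inl_desc _ _

lemma cylV_γ₁_app (M : ModuleCat.{u} R) :
    (cylV R V v hv).γ₁.app M = cylInr R V v hv M := by
  exact coprod.inr_desc _ _

/-- concrete pushout analysis for `f ⋆ γ₀` -/
lemma mono_star_γ₀ {M N : ModuleCat.{u} R} (f : M ⟶ N) :
    Mono (starMap (cylV R V v hv).γ₀ f) ↔
      Function.Injective (LinearMap.prodMap (LinearMap.id (M := ↑N)) (ntMap V f.hom)) := by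
  set inl : N ⟶ ModuleCat.of R (↑N × NTensor R V ↑M) :=
    ModuleCat.ofHom (LinearMap.prod LinearMap.id 0 : ↑N →ₗ[R] ↑N × NTensor R V ↑M) with hinl
  set inr : (cylFunctor (R := R) V).obj M ⟶ ModuleCat.of R (↑N × NTensor R V ↑M) :=
    ModuleCat.ofHom (LinearMap.prodMap f.hom LinearMap.id : ↑M × NTensor R V ↑M →ₗ[R] ↑N × NTensor R V ↑M)
    with hinr
  have w : (𝟭 (ModuleCat.{u} R)).map f ≫ inl = (cylV R V v hv).γ₀.app M ≫ inr := by
    rw [cylV_γ₀_app]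
    exact ModuleCat.hom_ext (LinearMap.ext fun m => rfl)
  have hc : IsColimit (PushoutCocone.mk inl inr w) := by
    refine PushoutCocone.IsColimit.mk w
      (fun s => ModuleCat.ofHom (LinearMap.coprod s.inl.hom
        (s.inr.hom ∘ₗ (LinearMap.inr R ↑M (NTensor R V ↑M))))) (fun s => ?_) (fun s => ?_)
      (fun s m hm1 hm2 => ?_)
    · refine ModuleCat.hom_ext (LinearMap.ext fun n => ?_)
      show s.inl.hom n + s.inr.hom 0 = s.inl.hom n
      rw [map_zero, add_zero]
    · refine ModuleCat.hom_ext (LinearMap.ext fun p => ?_)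
      obtain ⟨a, b⟩ := p
      have cond2 : f ≫ s.inl = cylInl R V M ≫ s.inr := by
        rw [← cylV_γ₀_app R V v hv M]
        exact s.condition
      have hc1 : s.inl (f a) = s.inr (a, 0) := ConcreteCategory.congr_hom cond2 a
      show s.inl (f a) + s.inr (0, b) = s.inr (a, b)
      calc s.inl (f a) + s.inr (0, b)
          = s.inr (a, 0) + s.inr (0, b) := congrArg (fun z => z + s.inr (0, b)) hc1
        _ = s.inr ((a, 0) + (0, b)) := (map_add _ _ _).symm
        _ = s.inr (a, b) := by
            congr 1
            show ((a, 0) : ↑M × NTensor R V ↑M) + (0, b) = (a, b)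
            exact Prod.ext (add_zero a) (zero_add b)
    · refine ModuleCat.hom_ext (LinearMap.ext fun p => ?_)
      obtain ⟨a, b⟩ := p
      have e1 : m (inl a) = s.inl a := ConcreteCategory.congr_hom hm1 a
      have e2 : m (inr (0, b)) = s.inr (0, b) := ConcreteCategory.congr_hom hm2 (0, b)
      show m (a, b) = s.inl a + s.inr (0, b)
      calc m (a, b) = m (inl a + inr (0, b)) := by
            congr 1
            show ((a, b) : ↑N × NTensor R V ↑M) = (a, 0) + (f 0, b)
            rw [map_zero]
            simp
        _ = m (inl a) + m (inr (0, b)) := map_add _ _ _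
        _ = s.inl a + s.inr (0, b) := by rw [e1, e2]
  rw [mono_starMap_iff (cylV R V v hv).γ₀ f w hc
    (ModuleCat.ofHom (LinearMap.prodMap LinearMap.id (ntMap V f.hom))) ?_ ?_]
  · exact ModuleCat.mono_iff_injective _
  · rw [cylV_γ₀_app]
    exact ModuleCat.hom_ext (LinearMap.ext fun n => by
      show ((n : ↑N), ntMap V f.hom 0) = (n, 0)
      rw [map_zero])
  · exact ModuleCat.hom_ext (LinearMap.ext fun p => rfl)

end StarGamma

section StarGamma1
variable (R : Type u) [Ring R] (V : Type u) [AddCommGroup V] [Module R V]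
  [Module Rᵐᵒᵖ V] [SMulCommClass R Rᵐᵒᵖ V]
  (v : R →ₗ[R] V) (hv : ∀ x s : R, v (x * s) = MulOpposite.op s • v x)

/-- the concrete `f ⋆ γ₁` map `(n,t) ↦ (n, v⊗n + (V⊗f)t)` -/
noncomputable def gOneH {M N : ModuleCat.{u} R} (f : M ⟶ N) :
    ↑N × NTensor R V ↑M →ₗ[R] ↑N × NTensor R V ↑N :=
  LinearMap.prod (LinearMap.fst R ↑N (NTensor R V ↑M))
    ((vMap R V v hv ↑N) ∘ₗ (LinearMap.fst R ↑N (NTensor R V ↑M)) +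
      (ntMap V f.hom) ∘ₗ (LinearMap.snd R ↑N (NTensor R V ↑M)))

/-- concrete pushout analysis for `f ⋆ γ₁` -/
lemma mono_star_γ₁ {M N : ModuleCat.{u} R} (f : M ⟶ N) :
    Mono (starMap (cylV R V v hv).γ₁ f) ↔ Function.Injective (gOneH R V v hv f) := by
  set inl : N ⟶ ModuleCat.of R (↑N × NTensor R V ↑M) :=
    ModuleCat.ofHom (LinearMap.prod LinearMap.id 0 : ↑N →ₗ[R] ↑N × NTensor R V ↑M) with hinl
  set inr : (cylFunctor (R := R) V).obj M ⟶ ModuleCat.of R (↑N × NTensor R V ↑M) :=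
    ModuleCat.ofHom (LinearMap.prod (f.hom ∘ₗ LinearMap.fst R ↑M (NTensor R V ↑M))
      ((LinearMap.snd R ↑M (NTensor R V ↑M)) -
        (vMap R V v hv ↑M) ∘ₗ (LinearMap.fst R ↑M (NTensor R V ↑M))) :
      ↑M × NTensor R V ↑M →ₗ[R] ↑N × NTensor R V ↑M) with hinr
  have w : (𝟭 (ModuleCat.{u} R)).map f ≫ inl = (cylV R V v hv).γ₁.app M ≫ inr := by
    rw [cylV_γ₁_app]
    refine ModuleCat.hom_ext (LinearMap.ext fun m => ?_)
    show ((f m, 0) : ↑N × NTensor R V ↑M)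
      = (f m, vMap R V v hv ↑M m - vMap R V v hv ↑M m)
    rw [sub_self]
  have hc : IsColimit (PushoutCocone.mk inl inr w) := by
    refine PushoutCocone.IsColimit.mk w
      (fun s => ModuleCat.ofHom (LinearMap.coprod s.inl.hom
        (s.inr.hom ∘ₗ (LinearMap.inr R ↑M (NTensor R V ↑M))))) (fun s => ?_) (fun s => ?_)
      (fun s m hm1 hm2 => ?_)
    · refine ModuleCat.hom_ext (LinearMap.ext fun n => ?_)
      show s.inl.hom n + s.inr.hom 0 = s.inl.hom n
      rw [map_zero, add_zero]
    · refine ModuleCat.hom_ext (LinearMap.ext fun p => ?_)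
      obtain ⟨a, b⟩ := p
      have cond2 : f ≫ s.inl = cylInr R V v hv M ≫ s.inr := by
        rw [← cylV_γ₁_app R V v hv M]
        exact s.condition
      have hc1 : s.inl (f a) = s.inr (a, vMap R V v hv ↑M a) :=
        ConcreteCategory.congr_hom cond2 a
      show s.inl (f a) + s.inr (0, b - vMap R V v hv ↑M a) = s.inr (a, b)
      calc s.inl (f a) + s.inr (0, b - vMap R V v hv ↑M a)
          = s.inr (a, vMap R V v hv ↑M a) + s.inr (0, b - vMap R V v hv ↑M a) :=
            congrArg (fun z => z + s.inr (0, b - vMap R V v hv ↑M a)) hc1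
        _ = s.inr ((a, vMap R V v hv ↑M a) + (0, b - vMap R V v hv ↑M a)) :=
            (map_add _ _ _).symm
        _ = s.inr (a, b) := by
            congr 1
            show ((a, vMap R V v hv ↑M a) : ↑M × NTensor R V ↑M)
              + (0, b - vMap R V v hv ↑M a) = (a, b)
            exact Prod.ext (add_zero a) (add_sub_cancel _ _)
    · refine ModuleCat.hom_ext (LinearMap.ext fun p => ?_)
      obtain ⟨a, b⟩ := p
      have e1 : m (inl a) = s.inl a := ConcreteCategory.congr_hom hm1 a
      have e2 : m (inr (0, b)) = s.inr (0, b) := ConcreteCategory.congr_hom hm2 (0, b)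
      show m (a, b) = s.inl a + s.inr (0, b)
      calc m (a, b) = m (inl a + inr (0, b)) := by
            congr 1
            show ((a, b) : ↑N × NTensor R V ↑M)
              = (a, 0) + (f 0, b - vMap R V v hv ↑M 0)
            rw [map_zero, map_zero, sub_zero]
            simp
        _ = m (inl a) + m (inr (0, b)) := map_add _ _ _
        _ = s.inl a + s.inr (0, b) := by rw [e1, e2]
  rw [mono_starMap_iff (cylV R V v hv).γ₁ f w hc (ModuleCat.ofHom (gOneH R V v hv f)) ?_ ?_]
  · exact ModuleCat.mono_iff_injective _
  · rw [cylV_γ₁_app]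
    refine ModuleCat.hom_ext (LinearMap.ext fun n => ?_)
    show ((n, vMap R V v hv ↑N n + ntMap V f.hom 0) : ↑N × NTensor R V ↑N)
      = (n, vMap R V v hv ↑N n)
    rw [map_zero, add_zero]
  · refine ModuleCat.hom_ext (LinearMap.ext fun p => ?_)
    obtain ⟨a, b⟩ := p
    show ((f a, vMap R V v hv ↑N (f a) + ntMap V f.hom (b - vMap R V v hv ↑M a)) :
        ↑N × NTensor R V ↑N) = (f a, ntMap V f.hom b)
    rw [map_sub, ntMap_vMap]
    congr 1
    abel

end StarGamma1

section StarGammaFull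
variable (R : Type u) [Ring R] (V : Type u) [AddCommGroup V] [Module R V]
  [Module Rᵐᵒᵖ V] [SMulCommClass R Rᵐᵒᵖ V]
  (v : R →ₗ[R] V) (hv : ∀ x s : R, v (x * s) = MulOpposite.op s • v x)

variable {M N : ModuleCat.{u} R}

/-- relation map for the concrete pushout of `f` along `γ` -/
noncomputable def gDelta (f : M ⟶ N) : ↑M →ₗ[R] ↑N × ↑N × NTensor R V ↑M :=
  LinearMap.prod f.hom (LinearMap.prod (-f.hom) (vMap R V v hv ↑M))

/-- concrete pushout of `f` along `γ` -/
noncomputable def QObj (f : M ⟶ N) : ModuleCat.{u} R :=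
  ModuleCat.of R ((↑N × ↑N × NTensor R V ↑M) ⧸ LinearMap.range (gDelta R V v hv f))

noncomputable def jOne (f : M ⟶ N) : N ⟶ QObj R V v hv f :=
  ModuleCat.ofHom ((LinearMap.range (gDelta R V v hv f)).mkQ ∘ₗ LinearMap.inl R ↑N (↑N × NTensor R V ↑M))

noncomputable def jTwo (f : M ⟶ N) : N ⟶ QObj R V v hv f :=
  ModuleCat.ofHom ((LinearMap.range (gDelta R V v hv f)).mkQ ∘ₗ
    (LinearMap.inr R ↑N (↑N × NTensor R V ↑M)) ∘ₗ (LinearMap.inl R ↑N (NTensor R V ↑M)))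

noncomputable def inlQ (f : M ⟶ N) :
    (double (ModuleCat.{u} R)).obj N ⟶ QObj R V v hv f :=
  coprod.desc (jOne R V v hv f) (jTwo R V v hv f)

noncomputable def inrQ (f : M ⟶ N) :
    (cylFunctor (R := R) V).obj M ⟶ QObj R V v hv f :=
  ModuleCat.ofHom ((LinearMap.range (gDelta R V v hv f)).mkQ ∘ₗ
    LinearMap.prodMap f.hom (LinearMap.inr R ↑N (NTensor R V ↑M)))

/-- the concrete `f ⋆ γ` map on the ambient module -/
noncomputable def gH0 (f : M ⟶ N) :
    ↑N × ↑N × NTensor R V ↑M →ₗ[R] ↑N × NTensor R V ↑N :=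
  LinearMap.prod
    (LinearMap.fst R ↑N (↑N × NTensor R V ↑M) +
      (LinearMap.fst R ↑N (NTensor R V ↑M)) ∘ₗ (LinearMap.snd R ↑N (↑N × NTensor R V ↑M)))
    ((vMap R V v hv ↑N) ∘ₗ
        ((LinearMap.fst R ↑N (NTensor R V ↑M)) ∘ₗ (LinearMap.snd R ↑N (↑N × NTensor R V ↑M)))
      + (ntMap V f.hom) ∘ₗ
        ((LinearMap.snd R ↑N (NTensor R V ↑M)) ∘ₗ (LinearMap.snd R ↑N (↑N × NTensor R V ↑M))))

lemma gH0_ker (f : M ⟶ N) :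
    LinearMap.range (gDelta R V v hv f) ≤ LinearMap.ker (gH0 R V v hv f) := by
  rintro x ⟨m, rfl⟩
  simp only [LinearMap.mem_ker]
  show ((f.hom m + (-f.hom) m, vMap R V v hv ↑N ((-f.hom) m) + ntMap V f.hom (vMap R V v hv ↑M m)) :
      ↑N × NTensor R V ↑N) = 0
  rw [LinearMap.neg_apply, map_neg, ntMap_vMap]
  simp

/-- the concrete `f ⋆ γ` map -/
noncomputable def gH (f : M ⟶ N) : QObj R V v hv f ⟶ (cylFunctor (R := R) V).obj N :=
  ModuleCat.ofHom (Submodule.liftQ _ (gH0 R V v hv f) (gH0_ker R V v hv f))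

lemma gammaCocone_w (f : M ⟶ N) :
    (double (ModuleCat.{u} R)).map f ≫ inlQ R V v hv f
      = (cylV R V v hv).γ.app M ≫ inrQ R V v hv f := by
  show coprod.map f f ≫ coprod.desc (jOne R V v hv f) (jTwo R V v hv f) = _
  rw [cylV_γ_app, coprod.map_desc]
  erw [coprod.desc_comp]
  congr 1
  · -- f ≫ jTwo = cylInr ≫ inrQ
    refine ModuleCat.hom_ext (LinearMap.ext fun m => ?_)
    show Submodule.Quotient.mk ((0, f m, 0) : ↑N × ↑N × NTensor R V ↑M)
      = Submodule.Quotient.mk ((f m, 0, vMap R V v hv ↑M m) : ↑N × ↑N × NTensor R V ↑M)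
    refine (Submodule.Quotient.eq _).mpr ⟨-m, ?_⟩
    show ((f.hom (-m), (-f.hom) (-m), vMap R V v hv ↑M (-m)) : ↑N × ↑N × NTensor R V ↑M)
      = (0, f m, 0) - (f m, 0, vMap R V v hv ↑M m)
    rw [Prod.mk_sub_mk, Prod.mk_sub_mk]
    simp

noncomputable def gammaCocone_isColimit (f : M ⟶ N) :
    IsColimit (PushoutCocone.mk (inlQ R V v hv f) (inrQ R V v hv f)
      (gammaCocone_w R V v hv f)) := by
  have key : ∀ (s : PushoutCocone ((double (ModuleCat.{u} R)).map f)
      ((cylV R V v hv).γ.app M)),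
      (∀ m : ↑M, (coprod.inl ≫ s.inl : N ⟶ s.pt) (f m)
          = s.inr ((m, 0) : ↑M × NTensor R V ↑M)) ∧
      (∀ m : ↑M, (coprod.inr ≫ s.inl : N ⟶ s.pt) (f m)
          = s.inr ((m, vMap R V v hv ↑M m) : ↑M × NTensor R V ↑M)) := by
    intro s
    have c := s.condition
    have heqL : coprod.inl ≫ (cylV R V v hv).γ.app M = cylInl R V M := by
      rw [cylV_γ_app]
      exact coprod.inl_desc _ _
    have heqR : coprod.inr ≫ (cylV R V v hv).γ.app M = cylInr R V v hv M := by
      rw [cylV_γ_app]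
      exact coprod.inr_desc _ _
    have cl : f ≫ coprod.inl ≫ s.inl = cylInl R V M ≫ s.inr := by
      have h := congrArg (fun g => coprod.inl ≫ g) c
      simp only [double_map] at h
      erw [← Category.assoc, ← Category.assoc, coprod.inl_map, heqL, Category.assoc] at h
      exact h
    have cr : f ≫ coprod.inr ≫ s.inl = cylInr R V v hv M ≫ s.inr := by
      have h := congrArg (fun g => coprod.inr ≫ g) c
      simp only [double_map] at h
      erw [← Category.assoc, ← Category.assoc, coprod.inr_map, heqR, Category.assoc] at h
      exact h
    exact ⟨fun m => ConcreteCategory.congr_hom cl m, fun m => ConcreteCategory.congr_hom cr m⟩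
  refine PushoutCocone.IsColimit.mk _
    (fun s => ModuleCat.ofHom (Submodule.liftQ _
      (LinearMap.coprod (coprod.inl ≫ s.inl : N ⟶ s.pt).hom
        (LinearMap.coprod (coprod.inr ≫ s.inl : N ⟶ s.pt).hom
          ((s.inr : (cylFunctor (R := R) V).obj M ⟶ s.pt).hom ∘ₗ
            LinearMap.inr R ↑M (NTensor R V ↑M))))
      ?_)) (fun s => ?_) (fun s => ?_) (fun s m' hm1 hm2 => ?_)
  · -- kernel condition
    rintro x ⟨m, rfl⟩
    simp only [LinearMap.mem_ker]
    obtain ⟨ec1, ec2⟩ := key s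
    show (coprod.inl ≫ s.inl) (f m) + ((coprod.inr ≫ s.inl) ((-f.hom) m)
        + s.inr (0, vMap R V v hv ↑M m)) = 0
    rw [LinearMap.neg_apply, map_neg, ec1 m, ec2 m]
    have hz : ((m, 0) : ↑M × NTensor R V ↑M)
        + (-((m, vMap R V v hv ↑M m) : ↑M × NTensor R V ↑M)
          + (0, vMap R V v hv ↑M m)) = 0 := by
      rw [Prod.neg_mk, Prod.mk_add_mk, Prod.mk_add_mk]
      simp
    calc s.inr ((m, 0) : ↑M × NTensor R V ↑M)
          + (-(s.inr ((m, vMap R V v hv ↑M m) : ↑M × NTensor R V ↑M))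
            + s.inr (0, vMap R V v hv ↑M m))
        = s.inr (((m, 0) : ↑M × NTensor R V ↑M)
            + (-((m, vMap R V v hv ↑M m) : ↑M × NTensor R V ↑M)
              + (0, vMap R V v hv ↑M m))) := by erw [map_add, map_add, map_neg]
      _ = 0 := by erw [hz, map_zero]
  · -- fac left
    refine coprod.hom_ext ?_ ?_
    · show coprod.inl ≫ coprod.desc (jOne R V v hv f) (jTwo R V v hv f) ≫ _
        = coprod.inl ≫ s.inl
      erw [coprod.inl_desc_assoc]
      refine ModuleCat.hom_ext (LinearMap.ext fun n => ?_)
      show (coprod.inl ≫ s.inl) n + ((coprod.inr ≫ s.inl) 0 + s.inr (0, 0)) = _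
      erw [map_zero, show ((0, 0) : ↑M × NTensor R V ↑M) = 0 from rfl, map_zero,
        add_zero, add_zero]
    · show coprod.inr ≫ coprod.desc (jOne R V v hv f) (jTwo R V v hv f) ≫ _
        = coprod.inr ≫ s.inl
      erw [coprod.inr_desc_assoc]
      refine ModuleCat.hom_ext (LinearMap.ext fun n => ?_)
      show (coprod.inl ≫ s.inl) 0 + ((coprod.inr ≫ s.inl) n + s.inr (0, 0)) = _
      erw [map_zero, show ((0, 0) : ↑M × NTensor R V ↑M) = 0 from rfl, map_zero,
        add_zero, zero_add]
  · -- fac right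
    obtain ⟨ec1, _⟩ := key s
    refine ModuleCat.hom_ext (LinearMap.ext fun p => ?_)
    obtain ⟨a, b⟩ := p
    show (coprod.inl ≫ s.inl) (f a) + ((coprod.inr ≫ s.inl) 0 + s.inr (0, b))
      = s.inr (a, b)
    rw [map_zero, zero_add]
    calc (coprod.inl ≫ s.inl) (f a) + s.inr (0, b)
        = s.inr ((a, 0) : ↑M × NTensor R V ↑M) + s.inr (0, b) :=
          congrArg (fun z => z + s.inr (0, b)) (ec1 a)
      _ = s.inr (((a, 0) : ↑M × NTensor R V ↑M) + (0, b)) := (map_add _ _ _).symm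
      _ = s.inr (a, b) := by
          congr 1
          show ((a, 0) : ↑M × NTensor R V ↑M) + (0, b) = (a, b)
          exact Prod.ext (add_zero a) (zero_add b)
  · -- uniqueness
    obtain ⟨ec1, ec2⟩ := key s
    refine ModuleCat.hom_ext (LinearMap.ext fun q => ?_)
    obtain ⟨x, rfl⟩ := Submodule.Quotient.mk_surjective _ q
    obtain ⟨n₁, n₂, t⟩ := x
    have mj₁ : jOne R V v hv f ≫ m' = coprod.inl ≫ s.inl := by
      erw [show jOne R V v hv f = coprod.inl ≫ inlQ R V v hv f by
        rw [inlQ, coprod.inl_desc], Category.assoc, hm1]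
    have mj₂ : jTwo R V v hv f ≫ m' = coprod.inr ≫ s.inl := by
      erw [show jTwo R V v hv f = coprod.inr ≫ inlQ R V v hv f by
        rw [inlQ, coprod.inr_desc], Category.assoc, hm1]
    have hz : ((n₁, n₂, t) : ↑N × ↑N × NTensor R V ↑M)
        = (n₁, 0, 0) + (0, n₂, 0) + (0, 0, t) := by simp
    have hdec : jOne R V v hv f n₁ + jTwo R V v hv f n₂ + inrQ R V v hv f (0, t)
        = (LinearMap.range (gDelta R V v hv f)).mkQ (n₁, n₂, t) := by
      show (LinearMap.range (gDelta R V v hv f)).mkQ (n₁, 0, 0)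
          + (LinearMap.range (gDelta R V v hv f)).mkQ (0, n₂, 0)
          + (LinearMap.range (gDelta R V v hv f)).mkQ (f.hom 0, 0, t) = _
      rw [map_zero, ← map_add, ← map_add, ← hz]
    calc m' (Submodule.Quotient.mk (n₁, n₂, t))
        = m' (jOne R V v hv f n₁) + m' (jTwo R V v hv f n₂)
          + m' (inrQ R V v hv f (0, t)) := by
          rw [show (Submodule.Quotient.mk (n₁, n₂, t) :
              (↑N × ↑N × NTensor R V ↑M) ⧸ LinearMap.range (gDelta R V v hv f))
            = jOne R V v hv f n₁ + jTwo R V v hv f n₂ + inrQ R V v hv f (0, t) from by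
              rw [hdec]; rfl, map_add, map_add]
      _ = (coprod.inl ≫ s.inl) n₁ + (coprod.inr ≫ s.inl) n₂ + s.inr (0, t) := by
          rw [show m' (jOne R V v hv f n₁) = (coprod.inl ≫ s.inl) n₁ from
              ConcreteCategory.congr_hom mj₁ n₁,
            show m' (jTwo R V v hv f n₂) = (coprod.inr ≫ s.inl) n₂ from
              ConcreteCategory.congr_hom mj₂ n₂,
            show m' (inrQ R V v hv f (0, t)) = s.inr (0, t) from
              ConcreteCategory.congr_hom hm2 (0, t)]
      _ = (coprod.inl ≫ s.inl) n₁ + ((coprod.inr ≫ s.inl) n₂ + s.inr (0, t)) := by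
          rw [add_assoc]

lemma mono_star_γfull (f : M ⟶ N) :
    Mono (starMap (cylV R V v hv).γ f) ↔ Mono (gH R V v hv f) := by
  refine mono_starMap_iff (cylV R V v hv).γ f (gammaCocone_w R V v hv f)
    (gammaCocone_isColimit R V v hv f) (gH R V v hv f) ?_ ?_
  · -- inlQ ≫ gH = γ.app N
    refine coprod.hom_ext ?_ ?_
    · show coprod.inl ≫ coprod.desc (jOne R V v hv f) (jTwo R V v hv f) ≫ _
        = coprod.inl ≫ (cylV R V v hv).γ.app N
      erw [coprod.inl_desc_assoc, cylV_γ_app, coprod.inl_desc]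
      refine ModuleCat.hom_ext (LinearMap.ext fun n => ?_)
      show ((n + 0, vMap R V v hv ↑N 0 + ntMap V f.hom 0) : ↑N × NTensor R V ↑N) = (n, 0)
      rw [map_zero, map_zero, add_zero, add_zero]
    · show coprod.inr ≫ coprod.desc (jOne R V v hv f) (jTwo R V v hv f) ≫ _
        = coprod.inr ≫ (cylV R V v hv).γ.app N
      erw [coprod.inr_desc_assoc, cylV_γ_app, coprod.inr_desc]
      refine ModuleCat.hom_ext (LinearMap.ext fun n => ?_)
      show ((0 + n, vMap R V v hv ↑N n + ntMap V f.hom 0) : ↑N × NTensor R V ↑N)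
        = (n, vMap R V v hv ↑N n)
      rw [map_zero, add_zero, zero_add]
  · -- inrQ ≫ gH = Cyl f
    refine ModuleCat.hom_ext (LinearMap.ext fun p => ?_)
    obtain ⟨a, b⟩ := p
    show ((f a + 0, vMap R V v hv ↑N 0 + ntMap V f.hom b) : ↑N × NTensor R V ↑N)
      = (f a, ntMap V f.hom b)
    rw [map_zero, add_zero, zero_add]

end StarGammaFull

section Adjoint
variable (R : Type u) [Ring R] (V : Type u) [AddCommGroup V] [Module R V]
  [Module Rᵐᵒᵖ V] [SMulCommClass R Rᵐᵒᵖ V]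

/-- `Hom_R(V, Z)` with `R`-action through the right action on `V` -/
def HomV (Z : Type u) [AddCommGroup Z] [Module R Z] : Type u := V →ₗ[R] Z

instance (Z : Type u) [AddCommGroup Z] [Module R Z] : AddCommGroup (HomV R V Z) :=
  inferInstanceAs (AddCommGroup (V →ₗ[R] Z))

variable {R V}

/-- underlying linear map -/
def HomV.lin {Z : Type u} [AddCommGroup Z] [Module R Z] (φ : HomV R V Z) : V →ₗ[R] Z := φ

/-- constructor -/
def HomV.ofLin {Z : Type u} [AddCommGroup Z] [Module R Z] (φ : V →ₗ[R] Z) : HomV R V Z := φ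

lemma HomV.ext {Z : Type u} [AddCommGroup Z] [Module R Z] {φ ψ : HomV R V Z}
    (h : ∀ w, φ.lin w = ψ.lin w) : φ = ψ := LinearMap.ext h

@[simp] lemma HomV.lin_add {Z : Type u} [AddCommGroup Z] [Module R Z]
    (φ ψ : HomV R V Z) (w : V) : (φ + ψ).lin w = φ.lin w + ψ.lin w := rfl

@[simp] lemma HomV.lin_zero {Z : Type u} [AddCommGroup Z] [Module R Z] (w : V) :
    (0 : HomV R V Z).lin w = 0 := rfl

noncomputable instance {Z : Type u} [AddCommGroup Z] [Module R Z] :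
    SMul R (HomV R V Z) :=
  ⟨fun r φ => HomV.ofLin
    { toFun := fun w => φ.lin (MulOpposite.op r • w)
      map_add' := fun x y => by
        show φ.lin (MulOpposite.op r • (x + y))
          = φ.lin (MulOpposite.op r • x) + φ.lin (MulOpposite.op r • y)
        rw [smul_add, map_add]
      map_smul' := fun s w => by
        haveI := SMulCommClass.symm R Rᵐᵒᵖ V
        show φ.lin (MulOpposite.op r • s • w) = s • φ.lin (MulOpposite.op r • w)
        rw [smul_comm, map_smul] }⟩

@[simp] lemma HomV.lin_smul {Z : Type u} [AddCommGroup Z] [Module R Z]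
    (r : R) (φ : HomV R V Z) (w : V) :
    (r • φ).lin w = φ.lin (MulOpposite.op r • w) := rfl

noncomputable instance {Z : Type u} [AddCommGroup Z] [Module R Z] :
    Module R (HomV R V Z) where
  one_smul φ := HomV.ext fun w => by rw [HomV.lin_smul, MulOpposite.op_one, one_smul]
  mul_smul r s φ := HomV.ext fun w => by
    rw [HomV.lin_smul, HomV.lin_smul, HomV.lin_smul, MulOpposite.op_mul, mul_smul]
  smul_zero r := HomV.ext fun w => rfl
  smul_add r φ ψ := HomV.ext fun w => rfl
  add_smul r s φ := HomV.ext fun w => by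
    rw [HomV.lin_add, HomV.lin_smul, HomV.lin_smul, HomV.lin_smul,
      MulOpposite.op_add, add_smul, map_add]
  zero_smul φ := HomV.ext fun w => by
    rw [HomV.lin_smul, HomV.lin_zero, MulOpposite.op_zero, zero_smul, map_zero]

variable (R V)

/-- functoriality of `HomV` -/
noncomputable def hMap {Z Z' : Type u} [AddCommGroup Z] [Module R Z]
    [AddCommGroup Z'] [Module R Z'] (g : Z →ₗ[R] Z') :
    HomV R V Z →ₗ[R] HomV R V Z' where
  toFun φ := HomV.ofLin (g ∘ₗ φ.lin)
  map_add' φ ψ := HomV.ext fun w => by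
    show g (φ.lin w + ψ.lin w) = g (φ.lin w) + g (ψ.lin w)
    rw [map_add]
  map_smul' r φ := HomV.ext fun w => rfl

/-- the right adjoint `Z ↦ Z × Hom_R(V,Z)` of the cylinder functor -/
noncomputable def Gfun : ModuleCat.{u} R ⥤ ModuleCat.{u} R where
  obj Z := ModuleCat.of R (↑Z × HomV R V ↑Z)
  map {Z Z'} g := ModuleCat.ofHom (LinearMap.prodMap g.hom (hMap R V g.hom))
  map_id Z := by
    refine ModuleCat.hom_ext (LinearMap.ext fun p => ?_)
    show (p.1, hMap R V LinearMap.id p.2) = p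
    refine Prod.ext rfl (HomV.ext fun w => rfl)
  map_comp {Z Z' Z''} g g' := by
    refine ModuleCat.hom_ext (LinearMap.ext fun p => ?_)
    refine Prod.ext rfl (HomV.ext fun w => rfl)

variable {R V}

/-- transpose of a map out of the cylinder -/
noncomputable def psi {X Z : ModuleCat.{u} R}
    (h : (cylFunctor (R := R) V).obj X ⟶ Z) : ↑X →ₗ[R] HomV R V ↑Z where
  toFun m := HomV.ofLin
    { toFun := fun w => h (0, Submodule.Quotient.mk (w ⊗ₜ[ℤ] m))
      map_add' := fun x y => by
        show h (0, Submodule.Quotient.mk ((x + y) ⊗ₜ[ℤ] m))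
          = h (0, Submodule.Quotient.mk (x ⊗ₜ[ℤ] m))
            + h (0, Submodule.Quotient.mk (y ⊗ₜ[ℤ] m))
        rw [TensorProduct.add_tmul, Submodule.Quotient.mk_add]
        erw [show ((0, Submodule.Quotient.mk (x ⊗ₜ[ℤ] m)
              + Submodule.Quotient.mk (y ⊗ₜ[ℤ] m)) : ↑X × NTensor R V ↑X)
          = (0, Submodule.Quotient.mk (x ⊗ₜ[ℤ] m))
            + (0, Submodule.Quotient.mk (y ⊗ₜ[ℤ] m)) from by simp, map_add]
      map_smul' := fun r w => by
        show h (0, Submodule.Quotient.mk ((r • w) ⊗ₜ[ℤ] m))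
          = r • h (0, Submodule.Quotient.mk (w ⊗ₜ[ℤ] m))
        rw [← TensorProduct.smul_tmul', Submodule.Quotient.mk_smul]
        erw [show ((0, r • Submodule.Quotient.mk (w ⊗ₜ[ℤ] m)) : ↑X × NTensor R V ↑X)
          = r • (0, Submodule.Quotient.mk (w ⊗ₜ[ℤ] m)) from by simp, map_smul] }
  map_add' m m' := HomV.ext fun w => by
    show h (0, Submodule.Quotient.mk (w ⊗ₜ[ℤ] (m + m'))) = _
    rw [TensorProduct.tmul_add, Submodule.Quotient.mk_add]
    erw [show ((0, Submodule.Quotient.mk (w ⊗ₜ[ℤ] m)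
          + Submodule.Quotient.mk (w ⊗ₜ[ℤ] m')) : ↑X × NTensor R V ↑X)
      = (0, Submodule.Quotient.mk (w ⊗ₜ[ℤ] m))
        + (0, Submodule.Quotient.mk (w ⊗ₜ[ℤ] m')) from by simp, map_add]
    rfl
  map_smul' r m := HomV.ext fun w => by
    show h (0, Submodule.Quotient.mk (w ⊗ₜ[ℤ] (r • m)))
      = h (0, Submodule.Quotient.mk ((MulOpposite.op r • w) ⊗ₜ[ℤ] m))
    congr 2
    refine (Submodule.Quotient.eq _).mpr ?_
    have hgen : ((MulOpposite.op r • w) ⊗ₜ[ℤ] m - w ⊗ₜ[ℤ] (r • m)) ∈ relators R V ↑X :=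
      Submodule.subset_span ⟨w, r, m, rfl⟩
    have h2 := neg_mem hgen
    rwa [neg_sub] at h2

/-- ℤ-bilinear pairing used to build the inverse transpose -/
noncomputable def bil {X Z : ModuleCat.{u} R} (k : ↑X →ₗ[R] HomV R V ↑Z) :
    V →ₗ[ℤ] ↑X →ₗ[ℤ] ↑Z where
  toFun w :=
    { toFun := fun m => (k m).lin w
      map_add' := fun m m' => by
        show (k (m + m')).lin w = (k m).lin w + (k m').lin w
        rw [map_add, HomV.lin_add]
      map_smul' := fun z m => by
        show (k (z • m)).lin w = z • (k m).lin w
        rw [map_zsmul]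
        rfl }
  map_add' x y := LinearMap.ext fun m => map_add ((k m).lin) x y
  map_smul' z w := LinearMap.ext fun m => by
    show (k m).lin (z • w) = z • (k m).lin w
    rw [map_zsmul]

/-- the inverse transpose on the big tensor product -/
noncomputable def thetaAux {X Z : ModuleCat.{u} R} (k : ↑X →ₗ[R] HomV R V ↑Z) :
    TensorProduct ℤ V ↑X →ₗ[R] ↑Z where
  toFun := TensorProduct.lift (bil k)
  map_add' := map_add _
  map_smul' r t := by
    simp only [RingHom.id_apply]
    induction t using TensorProduct.induction_on with
    | zero => rw [smul_zero, map_zero, smul_zero]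
    | tmul w m =>
      rw [TensorProduct.smul_tmul']
      show (k m).lin (r • w) = r • (k m).lin w
      rw [map_smul]
    | add x y hx hy => rw [smul_add, map_add, map_add, hx, hy, smul_add]

@[simp] lemma thetaAux_tmul {X Z : ModuleCat.{u} R} (k : ↑X →ₗ[R] HomV R V ↑Z)
    (w : V) (m : ↑X) : thetaAux k (w ⊗ₜ[ℤ] m) = (k m).lin w := rfl

/-- the inverse transpose `V ⊗_R X → Z` -/
noncomputable def theta {X Z : ModuleCat.{u} R} (k : ↑X →ₗ[R] HomV R V ↑Z) :
    NTensor R V ↑X →ₗ[R] ↑Z :=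
  Submodule.liftQ (relators R V ↑X) (thetaAux k) (by
    rw [relators, Submodule.span_le]
    rintro t ⟨w, r, m, rfl⟩
    simp only [SetLike.mem_coe, LinearMap.mem_ker, map_sub]
    rw [thetaAux_tmul, thetaAux_tmul]
    rw [show k (r • m) = r • k m from map_smul k r m]
    rw [HomV.lin_smul, sub_self])

@[simp] lemma theta_mk {X Z : ModuleCat.{u} R} (k : ↑X →ₗ[R] HomV R V ↑Z)
    (w : V) (m : ↑X) :
    theta k (Submodule.Quotient.mk (w ⊗ₜ[ℤ] m)) = (k m).lin w := rfl

lemma theta_psi {X Z : ModuleCat.{u} R} (h : (cylFunctor (R := R) V).obj X ⟶ Z)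
    (t : NTensor R V ↑X) : theta (psi h) t = h (0, t) := by
  obtain ⟨s, rfl⟩ := Submodule.Quotient.mk_surjective _ t
  induction s using TensorProduct.induction_on with
  | zero =>
    rw [show (Submodule.Quotient.mk (0 : TensorProduct ℤ V ↑X) : NTensor R V ↑X) = 0
      from rfl, map_zero]
    erw [show ((0, (0 : NTensor R V ↑X)) : ↑X × NTensor R V ↑X) = 0 from rfl, map_zero]
  | tmul w m => rw [theta_mk]; rfl
  | add x y hx hy =>
    rw [Submodule.Quotient.mk_add, map_add, hx, hy]
    erw [show ((0, Submodule.Quotient.mk x + Submodule.Quotient.mk y) :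
        ↑X × NTensor R V ↑X)
      = ((0, Submodule.Quotient.mk x) : ↑X × NTensor R V ↑X)
        + (0, Submodule.Quotient.mk y) from by simp, map_add]

lemma theta_comp {X Y Z : ModuleCat.{u} R} (k : ↑Y →ₗ[R] HomV R V ↑Z) (f : X ⟶ Y)
    (t : NTensor R V ↑X) :
    theta (k ∘ₗ f.hom) t = theta k (ntMap V f.hom t) := by
  obtain ⟨s, rfl⟩ := Submodule.Quotient.mk_surjective _ t
  induction s using TensorProduct.induction_on with
  | zero =>
    rw [show (Submodule.Quotient.mk (0 : TensorProduct ℤ V ↑X) : NTensor R V ↑X) = 0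
      from rfl, map_zero, map_zero, map_zero]
  | tmul w m =>
    rw [theta_mk, ntMap_mk, tmap_tmul, theta_mk]
    rfl
  | add x y hx hy =>
    rw [Submodule.Quotient.mk_add, map_add, map_add, map_add, hx, hy]

variable (R V)

/-- hom-set bijection of the cylinder adjunction -/
noncomputable def cylAdjEquiv (X Z : ModuleCat.{u} R) :
    ((cylFunctor (R := R) V).obj X ⟶ Z) ≃ (X ⟶ (Gfun R V).obj Z) where
  toFun h := ModuleCat.ofHom (LinearMap.prod
    (h.hom ∘ₗ (cylInl R V X).hom) (psi h))
  invFun k := ModuleCat.ofHom (LinearMap.coprod (LinearMap.fst R ↑Z (HomV R V ↑Z) ∘ₗ k.hom)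
    (theta (LinearMap.snd R ↑Z (HomV R V ↑Z) ∘ₗ k.hom)))
  left_inv h := by
    refine ModuleCat.hom_ext (LinearMap.ext fun p => ?_)
    obtain ⟨a, b⟩ := p
    show h (a, 0) + theta (psi h) b = h (a, b)
    erw [theta_psi, ← map_add]
    congr 1
    show ((a, 0) : ↑X × NTensor R V ↑X) + (0, b) = (a, b)
    exact Prod.ext (add_zero a) (zero_add b)
  right_inv k := by
    refine ModuleCat.hom_ext (LinearMap.ext fun m => ?_)
    refine Prod.ext ?_ (HomV.ext fun w => ?_)
    · show (LinearMap.fst R ↑Z (HomV R V ↑Z)) (k m)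
          + theta (LinearMap.snd R ↑Z (HomV R V ↑Z) ∘ₗ k.hom) 0 = (k m).1
      rw [map_zero, add_zero]
      rfl
    · show (LinearMap.fst R ↑Z (HomV R V ↑Z)) (k 0)
          + theta (LinearMap.snd R ↑Z (HomV R V ↑Z) ∘ₗ k.hom)
            (Submodule.Quotient.mk (w ⊗ₜ[ℤ] m)) = ((k m).2).lin w
      erw [map_zero, map_zero, zero_add, theta_mk]

/-- the cylinder adjunction -/
noncomputable def cylAdj : cylFunctor (R := R) V ⊣ Gfun R V :=
  Adjunction.mkOfHomEquiv
    { homEquiv := cylAdjEquiv R V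
      homEquiv_naturality_left_symm := by
        intro X' X Z f g
        refine ModuleCat.hom_ext (LinearMap.ext fun p => ?_)
        obtain ⟨a, b⟩ := p
        show (LinearMap.fst R ↑Z (HomV R V ↑Z)) (g (f a))
            + theta ((LinearMap.snd R ↑Z (HomV R V ↑Z) ∘ₗ g.hom) ∘ₗ f.hom) b
          = (LinearMap.fst R ↑Z (HomV R V ↑Z)) (g (f a))
            + theta (LinearMap.snd R ↑Z (HomV R V ↑Z) ∘ₗ g.hom) (ntMap V f.hom b)
        rw [theta_comp]
      homEquiv_naturality_right := by
        intro X Z Z' f g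
        refine ModuleCat.hom_ext (LinearMap.ext fun m => ?_)
        refine Prod.ext rfl (HomV.ext fun w => rfl) }

lemma cylFunctor_isLeftAdjoint : (cylFunctor (R := R) V).IsLeftAdjoint :=
  (cylAdj R V).isLeftAdjoint

end Adjoint







/-- if `v : R → V` is a map of `R`-`R`-bimodules which is a pure
monomorphism of right `R`-modules (so that `(Cyl_v, γ, σ)` with
`Cyl_v(M) = M ⊕ (V ⊗_R M)` is a cylinder for `(Mono, Mono^□)` on left `R`-modules),
then this cylinder is cartesian if and only if `V` is flat as a right `R`-module
(i.e. `V ⊗_R −` preserves injectivity). -/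
theorem statement6 (R : Type u) [Ring R] (V : Type u) [AddCommGroup V] [Module R V]
    [Module Rᵐᵒᵖ V] [SMulCommClass R Rᵐᵒᵖ V]
    (v : R →ₗ[R] V) (hv : ∀ x s : R, v (x * s) = MulOpposite.op s • v x)
    (hpure : ∀ (M : Type u) [AddCommGroup M] [Module R M],
      Function.Injective (vMap R V v hv M)) :
    (cylV R V v hv).IsCartesian (MorphismProperty.monomorphisms (ModuleCat.{u} R)) ↔
    (∀ (M N : Type u) [AddCommGroup M] [Module R M] [AddCommGroup N] [Module R N]
      (f : M →ₗ[R] N), Function.Injective f → Function.Injective (ntMap V f)) := by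
  constructor
  · intro hcart M N _ _ _ _ f hf
    let fc : ModuleCat.of R M ⟶ ModuleCat.of R N := ModuleCat.ofHom f
    have hmono : MorphismProperty.monomorphisms (ModuleCat.{u} R) fc := by
      show Mono fc
      exact (ModuleCat.mono_iff_injective fc).mpr hf
    have hs : Mono (starMap (cylV R V v hv).γ₀ fc) := hcart.star_γ₀ fc hmono
    have hinj := (mono_star_γ₀ R V v hv fc).mp hs
    intro a b hab
    have h2 : LinearMap.prodMap (LinearMap.id (M := N)) (ntMap V fc.hom) (0, a)
        = LinearMap.prodMap (LinearMap.id (M := N)) (ntMap V fc.hom) (0, b) := by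
      show ((0 : N), ntMap V f a) = ((0 : N), ntMap V f b)
      rw [hab]
    exact congrArg Prod.snd (hinj h2)
  · intro hflat
    refine ⟨?_, ?_, ?_, ?_⟩
    · show (cylFunctor (R := R) V).IsLeftAdjoint
      exact cylFunctor_isLeftAdjoint R V
    · -- stability under ⋆γ
      intro Mc Nc f hf
      have hfinj : Function.Injective f.hom :=
        (ModuleCat.mono_iff_injective f).mp hf
      show Mono (starMap (cylV R V v hv).γ f)
      rw [mono_star_γfull R V v hv f, ModuleCat.mono_iff_injective]
      refine (injective_iff_map_eq_zero _).mpr ?_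
      intro q hq
      obtain ⟨x, rfl⟩ := Submodule.Quotient.mk_surjective _ q
      obtain ⟨n₁, n₂, t⟩ := x
      have hq' : ((n₁ + n₂, vMap R V v hv ↑Nc n₂ + ntMap V f.hom t) :
          ↑Nc × NTensor R V ↑Nc) = 0 := hq
      have e1 : n₁ + n₂ = 0 := congrArg Prod.fst hq'
      have e2 : vMap R V v hv ↑Nc n₂ + ntMap V f.hom t = 0 := congrArg Prod.snd hq'
      have e3 : ntMap V f.hom (-t) = vMap R V v hv ↑Nc n₂ := by
        rw [map_neg]
        exact neg_eq_of_add_eq_zero_left e2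
      obtain ⟨m, hm1, hm2⟩ := pullback_lemma v hv hpure hflat
        f.hom hfinj (-t) n₂ e3
      erw [Submodule.Quotient.mk_eq_zero]
      refine ⟨-m, ?_⟩
      have hm1' : f.hom (-m) = n₁ := by
        rw [map_neg, hm1]
        exact neg_eq_of_add_eq_zero_left e1
      have hm2' : (-f.hom) (-m) = n₂ := by
        rw [show (-f.hom) (-m) = -(f.hom (-m)) from rfl, hm1']
        exact neg_eq_of_add_eq_zero_right e1
      have hm3' : vMap R V v hv ↑Mc (-m) = t := by
        rw [map_neg, hm2, neg_neg]
      show ((f.hom (-m), (-f.hom) (-m), vMap R V v hv ↑Mc (-m)) :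
          ↑Nc × ↑Nc × NTensor R V ↑Mc) = (n₁, n₂, t)
      rw [hm1', hm2', hm3']
    · -- stability under ⋆γ₀
      intro Mc Nc f hf
      have hfinj : Function.Injective f.hom :=
        (ModuleCat.mono_iff_injective f).mp hf
      show Mono (starMap (cylV R V v hv).γ₀ f)
      rw [mono_star_γ₀ R V v hv f]
      refine (injective_iff_map_eq_zero _).mpr ?_
      intro p hp
      obtain ⟨a, b⟩ := p
      have hp' : ((a, ntMap V f.hom b) : ↑Nc × NTensor R V ↑Nc) = 0 := hp
      have e1 : a = 0 := congrArg Prod.fst hp'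
      have e2 : b = 0 := by
        refine hflat ↑Mc ↑Nc f.hom hfinj ?_
        rw [map_zero]
        exact congrArg Prod.snd hp'
      rw [e1, e2]
      rfl
    · -- stability under ⋆γ₁
      intro Mc Nc f hf
      have hfinj : Function.Injective f.hom :=
        (ModuleCat.mono_iff_injective f).mp hf
      show Mono (starMap (cylV R V v hv).γ₁ f)
      rw [mono_star_γ₁ R V v hv f]
      refine (injective_iff_map_eq_zero _).mpr ?_
      intro p hp
      obtain ⟨a, b⟩ := p
      have hp' : ((a, vMap R V v hv ↑Nc a + ntMap V f.hom b) :
          ↑Nc × NTensor R V ↑Nc) = 0 := hp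
      have e1 : a = 0 := congrArg Prod.fst hp'
      have e2' : vMap R V v hv ↑Nc a + ntMap V f.hom b = 0 := congrArg Prod.snd hp'
      have e2 : b = 0 := by
        refine hflat ↑Mc ↑Nc f.hom hfinj ?_
        rw [map_zero, ← e2', e1, map_zero, zero_add]
      rw [e1, e2]
      rfl

end Modules
end Paper
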